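/- Let K = ℚ(ε) and let P = K[t^{α,p} : α ∈ {1,2}, p ∈ ℕ]. For every integer m ≥ 1, the operators L_0 and L_m defined below satisfy the Virasoro commutation relation [L_0, L_m] = −m·L_m as K-linear endomorphisms of P. -/

import Mathlib

/-!
Virasoro operators of the extended Toda hierarchy acting on the polynomial
algebra `P = K[t^{α,p}]`, `K = ℚ(ε)`.  Variables are indexed by
`(a, p) : Fin 2 × ℕ` where `a = 0` corresponds to `α = 1` and `a = 1` to `α = 2`.
-/

open MvPolynomial

noncomputable section ExtendedToda

abbrev K : Type := RatFunc ℚ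

abbrev P : Type := MvPolynomial (Fin 2 × ℕ) K

/-- The indeterminate `ε`. -/
def eps : K := RatFunc.X

/-- The coupling variable `t^{α,p}` (with `α = 1` encoded as `0`, `α = 2` as `1`). -/
def t (a : Fin 2) (p : ℕ) : P := X (a, p)

/-- The partial derivative `∂/∂t^{α,p}`. -/
def pd (a : Fin 2) (p : ℕ) (q : P) : P := pderiv (a, p) q

/-- `L_{-1} = Σ_{k≥1} Σ_α t^{α,k} ∂/∂t^{α,k−1} + ε^{−2} t^{1,0} t^{2,0}`
(the sum over `k ≥ 1` is written with `k` shifted by one). -/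
def Lneg1 (q : P) : P :=
  (∑ᶠ k : ℕ, (t 0 (k + 1) * pd 0 k q + t 1 (k + 1) * pd 1 k q))
    + eps⁻¹ ^ 2 • (t 0 0 * t 1 0 * q)

/-- `L_0 = Σ_{k≥1} k (t^{1,k} ∂_{1,k} + t^{2,k−1} ∂_{2,k−1}) + 2 Σ_{k≥1} t^{1,k} ∂_{2,k−1}
+ ε^{−2} (t^{1,0})²` (sums written with `k` shifted by one). -/
def L0 (q : P) : P :=
  (∑ᶠ k : ℕ, (((k : K) + 1) • (t 0 (k + 1) * pd 0 (k + 1) q + t 1 k * pd 1 k q)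
      + (2 : K) • (t 0 (k + 1) * pd 1 k q)))
    + eps⁻¹ ^ 2 • (t 0 0 * t 0 0 * q)

/-- The coefficients `α_m(k)`: `α_m(0) = m!` and
`α_m(k) = ((m+k)!/(k−1)!) Σ_{j=k}^{m+k} 1/j` for `k ≥ 1`. -/
def alphaC (m k : ℕ) : ℚ :=
  if k = 0 then (Nat.factorial m : ℚ)
  else ((Nat.factorial (m + k)) : ℚ) / ((Nat.factorial (k - 1)) : ℚ) * ∑ j ∈ Finset.Icc k (m + k), (1 : ℚ) / (j : ℚ)

/-- For `m ≥ 1`, the operator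
`L_m = ε² Σ_{k=1}^{m−1} k! (m−k)! ∂²/∂t^{2,k−1}∂t^{2,m−k−1}
 + Σ_{k≥1} ((m+k)!/(k−1)!) (t^{1,k} ∂_{1,m+k} + t^{2,k−1} ∂_{2,m+k−1})
 + 2 Σ_{k≥0} α_m(k) t^{1,k} ∂_{2,m+k−1}`
(the infinite sum over `k ≥ 1` is written with `k` shifted by one, the finite sum
over `1 ≤ k ≤ m−1` likewise, and `m+k−1` is written as `m−1+k`). -/
def Lpos (m : ℕ) (q : P) : P :=
  eps ^ 2 • (∑ k ∈ Finset.range (m - 1),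
      (((Nat.factorial (k + 1) * Nat.factorial (m - k - 1) : ℕ) : K) • pd 1 k (pd 1 (m - k - 2) q)))
  + (∑ᶠ k : ℕ, (((Nat.factorial (m + k + 1) : ℚ) / (Nat.factorial k : ℚ) : ℚ) : K) •
      (t 0 (k + 1) * pd 0 (m + k + 1) q + t 1 k * pd 1 (m + k) q))
  + (∑ᶠ k : ℕ, ((2 * alphaC m k : ℚ) : K) • (t 0 k * pd 1 (m - 1 + k) q))

/-- The family `L_0, L_1, L_2, …` of Virasoro operators. -/
def Lfam : ℕ → P → P
  | 0 => L0
  | (m + 1) => Lpos (m + 1)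

namespace Virasoro
open Finset

lemma pd_add (a : Fin 2) (p : ℕ) (f g : P) : pd a p (f + g) = pd a p f + pd a p g := by
  simp [pd]

lemma pd_sum {ι : Type*} (a : Fin 2) (p : ℕ) (s : Finset ι) (f : ι → P) :
    pd a p (∑ i ∈ s, f i) = ∑ i ∈ s, pd a p (f i) := by
  simp [pd]

lemma pd_C_mul (a : Fin 2) (p : ℕ) (c : K) (f : P) :
    pd a p (C c * f) = C c * pd a p f := by
  simp [pd, pderiv_C_mul]

lemma pd_t_mul (a b : Fin 2) (p r : ℕ) (f : P) :
    pd a p (t b r * f) = (if (b, r) = (a, p) then f else 0) + t b r * pd a p f := by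
  unfold pd t
  rw [pderiv_mul, pderiv_X, Pi.single_apply]
  split <;> simp [add_comm]

lemma pd_zero (a : Fin 2) (p : ℕ) : pd a p (0 : P) = 0 := by simp [pd]

lemma pd_comm (a b : Fin 2) (p r : ℕ) (f : P) :
    pd a p (pd b r f) = pd b r (pd a p f) := by
  unfold pd
  induction f using MvPolynomial.induction_on with
  | C c => simp
  | add f g hf hg => simp [hf, hg]
  | mul_X f i hf =>
      have h1 : pderiv (a, p) (pderiv (b, r) (X i : P)) = 0 := by
        classical
        rw [pderiv_X, Pi.single_apply]
        split <;> simp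
      have h2 : pderiv (b, r) (pderiv (a, p) (X i : P)) = 0 := by
        classical
        rw [pderiv_X, Pi.single_apply]
        split <;> simp
      simp only [pderiv_mul, map_add, pderiv_mul, h1, h2, hf, mul_zero, add_zero]
      ring

end Virasoro
namespace Virasoro
open Finset

/-- coefficient in `S1` -/
def ec (m k : ℕ) : K := (((Nat.factorial (m + k + 1) : ℚ) / (Nat.factorial k : ℚ) : ℚ) : K)
/-- coefficient in `S2` -/
def fc (m k : ℕ) : K := ((2 * alphaC m k : ℚ) : K)
/-- coefficient in `Dop` -/
def dc (m k : ℕ) : K := ((Nat.factorial (k + 1) * Nat.factorial (m - k - 1) : ℕ) : K)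

def S0a (N : ℕ) (q : P) : P := ∑ j ∈ range N, C ((j : K) + 1) * (t 0 (j+1) * pd 0 (j+1) q)
def S0b (N : ℕ) (q : P) : P := ∑ j ∈ range N, C ((j : K) + 1) * (t 1 j * pd 1 j q)
def S0c (N : ℕ) (q : P) : P := ∑ j ∈ range N, C (2 : K) * (t 0 (j+1) * pd 1 j q)
def Cop (q : P) : P := C (eps⁻¹ ^ 2) * (t 0 0 * (t 0 0 * q))
def Dop (m : ℕ) (q : P) : P :=
  C (eps ^ 2) * ∑ k ∈ range (m - 1), C (dc m k) * pd 1 k (pd 1 (m - k - 2) q)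
def S1a (m N : ℕ) (q : P) : P := ∑ k ∈ range N, C (ec m k) * (t 0 (k+1) * pd 0 (m+k+1) q)
def S1b (m N : ℕ) (q : P) : P := ∑ k ∈ range N, C (ec m k) * (t 1 k * pd 1 (m+k) q)
def S2op (m N : ℕ) (q : P) : P := ∑ k ∈ range N, C (fc m k) * (t 0 k * pd 1 (m-1+k) q)

def L0f (N : ℕ) (q : P) : P := S0a N q + S0b N q + S0c N q + Cop q
def Lf (m N : ℕ) (q : P) : P := Dop m q + S1a m N q + S1b m N q + S2op m N q

/-- The generic commutator of two "`t·∂`" families. -/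
lemma gen (N : ℕ) (c d : ℕ → K) (α β γ δ : Fin 2) (u v w x : ℕ → ℕ) (q : P) :
    (∑ j ∈ range N, C (c j) * (t α (u j) * pd β (v j)
        (∑ k ∈ range N, C (d k) * (t γ (w k) * pd δ (x k) q))))
    - (∑ k ∈ range N, C (d k) * (t γ (w k) * pd δ (x k)
        (∑ j ∈ range N, C (c j) * (t α (u j) * pd β (v j) q))))
    = (∑ k ∈ range N, ∑ j ∈ range N,
        if (γ, w k) = (β, v j) then C (c j) * C (d k) * (t α (u j) * pd δ (x k) q) else 0)
    - (∑ k ∈ range N, ∑ j ∈ range N,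
        if (α, u j) = (δ, x k) then C (c j) * C (d k) * (t γ (w k) * pd β (v j) q) else 0) := by
  have h1 : (∑ j ∈ range N, C (c j) * (t α (u j) * pd β (v j)
        (∑ k ∈ range N, C (d k) * (t γ (w k) * pd δ (x k) q))))
      = (∑ j ∈ range N, ∑ k ∈ range N,
          if (γ, w k) = (β, v j) then C (c j) * C (d k) * (t α (u j) * pd δ (x k) q) else 0)
      + (∑ j ∈ range N, ∑ k ∈ range N,
          C (c j) * C (d k) * (t α (u j) * (t γ (w k) * pd β (v j) (pd δ (x k) q)))) := by
    rw [← Finset.sum_add_distrib]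
    refine Finset.sum_congr rfl fun j _ => ?_
    rw [pd_sum]
    simp only [pd_C_mul, pd_t_mul]
    rw [Finset.mul_sum, Finset.mul_sum, ← Finset.sum_add_distrib]
    refine Finset.sum_congr rfl fun k _ => ?_
    split_ifs <;> ring
  have h2 : (∑ k ∈ range N, C (d k) * (t γ (w k) * pd δ (x k)
        (∑ j ∈ range N, C (c j) * (t α (u j) * pd β (v j) q))))
      = (∑ k ∈ range N, ∑ j ∈ range N,
          if (α, u j) = (δ, x k) then C (c j) * C (d k) * (t γ (w k) * pd β (v j) q) else 0)
      + (∑ k ∈ range N, ∑ j ∈ range N,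
          C (c j) * C (d k) * (t γ (w k) * (t α (u j) * pd δ (x k) (pd β (v j) q)))) := by
    rw [← Finset.sum_add_distrib]
    refine Finset.sum_congr rfl fun k _ => ?_
    rw [pd_sum]
    simp only [pd_C_mul, pd_t_mul]
    rw [Finset.mul_sum, Finset.mul_sum, ← Finset.sum_add_distrib]
    refine Finset.sum_congr rfl fun j _ => ?_
    split_ifs <;> ring
  have h3 : (∑ j ∈ range N, ∑ k ∈ range N,
          C (c j) * C (d k) * (t α (u j) * (t γ (w k) * pd β (v j) (pd δ (x k) q))))
      = (∑ k ∈ range N, ∑ j ∈ range N,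
          C (c j) * C (d k) * (t γ (w k) * (t α (u j) * pd δ (x k) (pd β (v j) q)))) := by
    rw [Finset.sum_comm]
    refine Finset.sum_congr rfl fun k _ => Finset.sum_congr rfl fun j _ => ?_
    rw [pd_comm]
    ring
  rw [h1, h2, h3, Finset.sum_comm (s := range N) (t := range N)]
  abel

end Virasoro
namespace Virasoro
open Finset

lemma sum_delta {N n : ℕ} {cond : ℕ → Prop} [DecidablePred cond] (F : ℕ → P)
    (hc : ∀ j, cond j ↔ j = n) (hz : N ≤ n → F n = 0) :
    (∑ j ∈ range N, if cond j then F j else 0) = F n := by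
  rw [Finset.sum_congr rfl fun j _ => if_congr (hc j) rfl rfl,
    Finset.sum_ite_eq' (range N) n F]
  split_ifs with h
  · rfl
  · exact (hz (by simpa using h)).symm

lemma sum_false {N M : ℕ} {cond : ℕ → ℕ → Prop} [∀ k j, Decidable (cond k j)] (F : ℕ → ℕ → P)
    (hc : ∀ k j, ¬ cond k j) :
    (∑ k ∈ range M, ∑ j ∈ range N, if cond k j then F k j else 0) = 0 :=
  Finset.sum_eq_zero fun k _ => Finset.sum_eq_zero fun j _ => if_neg (hc k j)

lemma S0a_add (N : ℕ) (x y : P) : S0a N (x + y) = S0a N x + S0a N y := by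
  simp [S0a, pd_add, mul_add, Finset.sum_add_distrib]
lemma S0b_add (N : ℕ) (x y : P) : S0b N (x + y) = S0b N x + S0b N y := by
  simp [S0b, pd_add, mul_add, Finset.sum_add_distrib]
lemma S0c_add (N : ℕ) (x y : P) : S0c N (x + y) = S0c N x + S0c N y := by
  simp [S0c, pd_add, mul_add, Finset.sum_add_distrib]
lemma Cop_add (x y : P) : Cop (x + y) = Cop x + Cop y := by
  simp only [Cop]; ring
lemma Dop_add (m : ℕ) (x y : P) : Dop m (x + y) = Dop m x + Dop m y := by
  simp [Dop, pd_add, mul_add, Finset.sum_add_distrib]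
lemma S1a_add (m N : ℕ) (x y : P) : S1a m N (x + y) = S1a m N x + S1a m N y := by
  simp [S1a, pd_add, mul_add, Finset.sum_add_distrib]
lemma S1b_add (m N : ℕ) (x y : P) : S1b m N (x + y) = S1b m N x + S1b m N y := by
  simp [S1b, pd_add, mul_add, Finset.sum_add_distrib]
lemma S2op_add (m N : ℕ) (x y : P) : S2op m N (x + y) = S2op m N x + S2op m N y := by
  simp [S2op, pd_add, mul_add, Finset.sum_add_distrib]

lemma pd_Cop (a : Fin 2) (p : ℕ) (q : P) (h : ¬ (((0 : Fin 2), (0:ℕ)) = (a, p))) :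
    pd a p (Cop q) = Cop (pd a p q) := by
  unfold Cop
  rw [pd_C_mul, pd_t_mul, pd_t_mul, if_neg h, if_neg h]
  ring

lemma PCd (m : ℕ) (q : P) : Cop (Dop m q) = Dop m (Cop q) := by
  have h : ∀ k k' : ℕ, pd 1 k (pd 1 k' (Cop q)) = Cop (pd 1 k (pd 1 k' q)) := by
    intro k k'
    rw [pd_Cop _ _ _ (by simp [Prod.ext_iff]), pd_Cop _ _ _ (by simp [Prod.ext_iff])]
  simp only [Dop]
  simp only [h]
  simp only [Cop, Finset.mul_sum]
  exact Finset.sum_congr rfl fun k _ => by ring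

lemma PC1a (m N : ℕ) (q : P) : Cop (S1a m N q) = S1a m N (Cop q) := by
  have h : ∀ k : ℕ, pd 0 (m+k+1) (Cop q) = Cop (pd 0 (m+k+1) q) := fun k =>
    pd_Cop _ _ _ (by simp [Prod.ext_iff])
  simp only [S1a]
  simp only [h]
  simp only [Cop, Finset.mul_sum]
  exact Finset.sum_congr rfl fun k _ => by ring

lemma PC1b (m N : ℕ) (q : P) : Cop (S1b m N q) = S1b m N (Cop q) := by
  have h : ∀ k : ℕ, pd 1 (m+k) (Cop q) = Cop (pd 1 (m+k) q) := fun k =>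
    pd_Cop _ _ _ (by simp [Prod.ext_iff])
  simp only [S1b]
  simp only [h]
  simp only [Cop, Finset.mul_sum]
  exact Finset.sum_congr rfl fun k _ => by ring

lemma PC2 (m N : ℕ) (q : P) : Cop (S2op m N q) = S2op m N (Cop q) := by
  have h : ∀ k : ℕ, pd 1 (m-1+k) (Cop q) = Cop (pd 1 (m-1+k) q) := fun k =>
    pd_Cop _ _ _ (by simp [Prod.ext_iff])
  simp only [S2op]
  simp only [h]
  simp only [Cop, Finset.mul_sum]
  exact Finset.sum_congr rfl fun k _ => by ring

end Virasoro
namespace Virasoro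
open Finset

lemma pd_comm3 (a b c : Fin 2) (p r s : ℕ) (f : P) :
    pd a p (pd b r (pd c s f)) = pd b r (pd c s (pd a p f)) := by
  rw [pd_comm a b, pd_comm a c]

/-- generic commutator of a `t·∂` family with a `∂∂` family -/
lemma genD (N M : ℕ) (c d : ℕ → K) (e : K) (α β δ δ' : Fin 2) (u v x x' : ℕ → ℕ) (q : P) :
    (∑ j ∈ range N, C (c j) * (t α (u j) * pd β (v j)
        (C e * ∑ k ∈ range M, C (d k) * pd δ (x k) (pd δ' (x' k) q))))
    - (C e * ∑ k ∈ range M, C (d k) * pd δ (x k) (pd δ' (x' k)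
        (∑ j ∈ range N, C (c j) * (t α (u j) * pd β (v j) q))))
    = - (∑ k ∈ range M, ∑ j ∈ range N,
        if (α, u j) = (δ, x k) then C e * (C (c j) * C (d k) * pd δ' (x' k) (pd β (v j) q)) else 0)
    - (∑ k ∈ range M, ∑ j ∈ range N,
        if (α, u j) = (δ', x' k) then C e * (C (c j) * C (d k) * pd δ (x k) (pd β (v j) q)) else 0) := by
  have h1 : (∑ j ∈ range N, C (c j) * (t α (u j) * pd β (v j)
        (C e * ∑ k ∈ range M, C (d k) * pd δ (x k) (pd δ' (x' k) q))))
      = ∑ k ∈ range M, ∑ j ∈ range N,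
          C e * (C (c j) * C (d k) * (t α (u j) * pd β (v j) (pd δ (x k) (pd δ' (x' k) q)))) := by
    rw [Finset.sum_comm]
    refine Finset.sum_congr rfl fun j _ => ?_
    rw [pd_C_mul, pd_sum, Finset.mul_sum, Finset.mul_sum, Finset.mul_sum]
    refine Finset.sum_congr rfl fun k _ => ?_
    rw [pd_C_mul]
    ring
  have h2 : (C e * ∑ k ∈ range M, C (d k) * pd δ (x k) (pd δ' (x' k)
        (∑ j ∈ range N, C (c j) * (t α (u j) * pd β (v j) q))))
      = (∑ k ∈ range M, ∑ j ∈ range N,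
          if (α, u j) = (δ, x k) then C e * (C (c j) * C (d k) * pd δ' (x' k) (pd β (v j) q)) else 0)
      + (∑ k ∈ range M, ∑ j ∈ range N,
          if (α, u j) = (δ', x' k) then C e * (C (c j) * C (d k) * pd δ (x k) (pd β (v j) q)) else 0)
      + (∑ k ∈ range M, ∑ j ∈ range N,
          C e * (C (c j) * C (d k) * (t α (u j) * pd δ (x k) (pd δ' (x' k) (pd β (v j) q))))) := by
    rw [Finset.mul_sum, ← Finset.sum_add_distrib, ← Finset.sum_add_distrib]
    refine Finset.sum_congr rfl fun k _ => ?_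
    rw [pd_sum, pd_sum]
    simp only [pd_C_mul, pd_t_mul, pd_add]
    rw [Finset.mul_sum, Finset.mul_sum, ← Finset.sum_add_distrib, ← Finset.sum_add_distrib]
    refine Finset.sum_congr rfl fun j _ => ?_
    split_ifs <;> (try simp only [pd_zero, mul_zero, zero_mul, add_zero, zero_add]) <;> ring
  have h3 : (∑ k ∈ range M, ∑ j ∈ range N,
          C e * (C (c j) * C (d k) * (t α (u j) * pd β (v j) (pd δ (x k) (pd δ' (x' k) q)))))
      = (∑ k ∈ range M, ∑ j ∈ range N,
          C e * (C (c j) * C (d k) * (t α (u j) * pd δ (x k) (pd δ' (x' k) (pd β (v j) q))))) := by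
    refine Finset.sum_congr rfl fun k _ => Finset.sum_congr rfl fun j _ => ?_
    rw [pd_comm3]
  rw [h1, h2, h3]
  abel

end Virasoro
namespace Virasoro
open Finset

section pairs
variable (m N : ℕ) (q : P)

lemma pair_aa (hq : ∀ a p, N ≤ p → pd a p q = 0) :
    S0a N (S1a m N q) - S1a m N (S0a N q) = C (-(m:K)) * S1a m N q := by
  have h := gen N (fun j => (j:K)+1) (ec m) 0 0 0 0 (fun j => j+1) (fun j => j+1)
      (fun k => k+1) (fun k => m+k+1) q
  beta_reduce at h
  simp only [S0a, S1a]
  rw [h]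
  have e1 : (∑ k ∈ range N, ∑ j ∈ range N,
      if ((0:Fin 2), k+1) = ((0:Fin 2), j+1) then
        C ((j:K)+1) * C (ec m k) * (t 0 (j+1) * pd 0 (m+k+1) q) else 0)
      = ∑ k ∈ range N, C ((k:K)+1) * C (ec m k) * (t 0 (k+1) * pd 0 (m+k+1) q) := by
    refine Finset.sum_congr rfl fun k hk => ?_
    exact sum_delta _ (fun j => by simp [Prod.ext_iff]; try omega)
      (fun h' => absurd (mem_range.mp hk) (by omega))
  have e2 : (∑ k ∈ range N, ∑ j ∈ range N,
      if ((0:Fin 2), j+1) = ((0:Fin 2), m+k+1) then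
        C ((j:K)+1) * C (ec m k) * (t 0 (k+1) * pd 0 (j+1) q) else 0)
      = ∑ k ∈ range N, C (((m+k:ℕ):K)+1) * C (ec m k) * (t 0 (k+1) * pd 0 (m+k+1) q) := by
    refine Finset.sum_congr rfl fun k hk => ?_
    exact sum_delta (n := m+k) _ (fun j => by simp [Prod.ext_iff]; try omega)
      (fun h' => by rw [hq 0 (m+k+1) (by omega)]; ring)
  rw [e1, e2, ← Finset.sum_sub_distrib, Finset.mul_sum]
  refine Finset.sum_congr rfl fun k _ => ?_
  have hC : C ((k:K)+1) - C (((m+k:ℕ):K)+1) = (C (-(m:K)) : P) := by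
    rw [← map_sub]; congr 1; push_cast; ring
  linear_combination (C (ec m k) * (t 0 (k+1) * pd 0 (m+k+1) q)) * hC

end pairs
end Virasoro
namespace Virasoro
open Finset

section pairs2
variable (m N : ℕ) (q : P)

lemma pair_ab :
    S0a N (S1b m N q) - S1b m N (S0a N q) = 0 := by
  have h := gen N (fun j => (j:K)+1) (ec m) 0 0 1 1 (fun j => j+1) (fun j => j+1)
      (fun k => k) (fun k => m+k) q
  beta_reduce at h
  simp only [S0a, S1b]
  rw [h, sum_false _ (fun k j => by simp [Prod.ext_iff]),
    sum_false _ (fun k j => by simp [Prod.ext_iff])]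
  simp

lemma pair_ba :
    S0b N (S1a m N q) - S1a m N (S0b N q) = 0 := by
  have h := gen N (fun j => (j:K)+1) (ec m) 1 1 0 0 (fun j => j) (fun j => j)
      (fun k => k+1) (fun k => m+k+1) q
  beta_reduce at h
  simp only [S0b, S1a]
  rw [h, sum_false _ (fun k j => by simp [Prod.ext_iff]),
    sum_false _ (fun k j => by simp [Prod.ext_iff])]
  simp

lemma pair_bb (hq : ∀ a p, N ≤ p → pd a p q = 0) :
    S0b N (S1b m N q) - S1b m N (S0b N q) = C (-(m:K)) * S1b m N q := by
  have h := gen N (fun j => (j:K)+1) (ec m) 1 1 1 1 (fun j => j) (fun j => j)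
      (fun k => k) (fun k => m+k) q
  beta_reduce at h
  simp only [S0b, S1b]
  rw [h]
  have e1 : (∑ k ∈ range N, ∑ j ∈ range N,
      if ((1:Fin 2), k) = ((1:Fin 2), j) then
        C ((j:K)+1) * C (ec m k) * (t 1 j * pd 1 (m+k) q) else 0)
      = ∑ k ∈ range N, C ((k:K)+1) * C (ec m k) * (t 1 k * pd 1 (m+k) q) := by
    refine Finset.sum_congr rfl fun k hk => ?_
    exact sum_delta _ (fun j => by simp [Prod.ext_iff]; try omega)
      (fun h' => absurd (mem_range.mp hk) (by omega))
  have e2 : (∑ k ∈ range N, ∑ j ∈ range N,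
      if ((1:Fin 2), j) = ((1:Fin 2), m+k) then
        C ((j:K)+1) * C (ec m k) * (t 1 k * pd 1 (j) q) else 0)
      = ∑ k ∈ range N, C (((m+k:ℕ):K)+1) * C (ec m k) * (t 1 k * pd 1 (m+k) q) := by
    refine Finset.sum_congr rfl fun k hk => ?_
    exact sum_delta (n := m+k) _ (fun j => by simp [Prod.ext_iff]; try omega)
      (fun h' => by rw [hq 1 (m+k) (by omega)]; ring)
  rw [e1, e2, ← Finset.sum_sub_distrib, Finset.mul_sum]
  refine Finset.sum_congr rfl fun k _ => ?_
  have hC : C ((k:K)+1) - C (((m+k:ℕ):K)+1) = (C (-(m:K)) : P) := by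
    rw [← map_sub]; congr 1; push_cast; ring
  linear_combination (C (ec m k) * (t 1 k * pd 1 (m+k) q)) * hC

lemma pair_ca (hq : ∀ a p, N ≤ p → pd a p q = 0) :
    S0c N (S1a m N q) - S1a m N (S0c N q)
      = - ∑ k ∈ range N, C (2:K) * C (ec m k) * (t 0 (k+1) * pd 1 (m+k) q) := by
  have h := gen N (fun _ => (2:K)) (ec m) 0 1 0 0 (fun j => j+1) (fun j => j)
      (fun k => k+1) (fun k => m+k+1) q
  beta_reduce at h
  simp only [S0c, S1a]
  rw [h, sum_false _ (fun k j => by simp [Prod.ext_iff])]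
  have e2 : (∑ k ∈ range N, ∑ j ∈ range N,
      if ((0:Fin 2), j+1) = ((0:Fin 2), m+k+1) then
        C (2:K) * C (ec m k) * (t 0 (k+1) * pd 1 j q) else 0)
      = ∑ k ∈ range N, C (2:K) * C (ec m k) * (t 0 (k+1) * pd 1 (m+k) q) := by
    refine Finset.sum_congr rfl fun k hk => ?_
    exact sum_delta (n := m+k) _ (fun j => by simp [Prod.ext_iff]; try omega)
      (fun h' => by rw [hq 1 (m+k) (by omega)]; ring)
  rw [e2, zero_sub]

lemma pair_cb (hq : ∀ a p, N ≤ p → pd a p q = 0) :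
    S0c N (S1b m N q) - S1b m N (S0c N q)
      = ∑ k ∈ range N, C (2:K) * C (ec m k) * (t 0 (k+1) * pd 1 (m+k) q) := by
  have h := gen N (fun _ => (2:K)) (ec m) 0 1 1 1 (fun j => j+1) (fun j => j)
      (fun k => k) (fun k => m+k) q
  beta_reduce at h
  simp only [S0c, S1b]
  rw [h, sum_false (cond := fun k j => ((0:Fin 2), j+1) = ((1:Fin 2), m+k))
      _ (fun k j => by simp [Prod.ext_iff])]
  have e1 : (∑ k ∈ range N, ∑ j ∈ range N,
      if ((1:Fin 2), k) = ((1:Fin 2), j) then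
        C (2:K) * C (ec m k) * (t 0 (j+1) * pd 1 (m+k) q) else 0)
      = ∑ k ∈ range N, C (2:K) * C (ec m k) * (t 0 (k+1) * pd 1 (m+k) q) := by
    refine Finset.sum_congr rfl fun k hk => ?_
    exact sum_delta _ (fun j => by simp [Prod.ext_iff]; try omega)
      (fun h' => absurd (mem_range.mp hk) (by omega))
  rw [e1, sub_zero]

end pairs2
end Virasoro
namespace Virasoro
open Finset

section pairs3
variable (m N : ℕ) (q : P)

lemma pair_a2 (hm : 1 ≤ m) (hq : ∀ a p, N ≤ p → pd a p q = 0) :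
    S0a N (S2op m N q) - S2op m N (S0a N q)
      = ∑ k ∈ range N, C (k : K) * C (fc m k) * (t 0 k * pd 1 (m-1+k) q) := by
  have h := gen N (fun j => (j:K)+1) (fc m) 0 0 0 1 (fun j => j+1) (fun j => j+1)
      (fun k => k) (fun k => m-1+k) q
  beta_reduce at h
  simp only [S0a, S2op]
  rw [h, sum_false (cond := fun k j => ((0:Fin 2), j+1) = ((1:Fin 2), m-1+k))
      _ (fun k j => by simp [Prod.ext_iff]), sub_zero]
  have e1 : (∑ k ∈ range N, ∑ j ∈ range N,
      if ((0:Fin 2), k) = ((0:Fin 2), j+1) then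
        C ((j:K)+1) * C (fc m k) * (t 0 (j+1) * pd 1 (m-1+k) q) else 0)
      = ∑ j ∈ range N, C ((j:K)+1) * C (fc m (j+1)) * (t 0 (j+1) * pd 1 (m-1+(j+1)) q) := by
    rw [Finset.sum_comm]
    refine Finset.sum_congr rfl fun j hj => ?_
    exact sum_delta (n := j+1) _ (fun k => by simp [Prod.ext_iff]; try omega)
      (fun h' => by rw [hq 1 (m-1+(j+1)) (by omega)]; ring)
  rw [e1]
  have hG0 : C ((0:ℕ) : K) * C (fc m 0) * (t 0 0 * pd 1 (m-1+0) q) = 0 := by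
    simp
  have hGN : C ((N:ℕ) : K) * C (fc m N) * (t 0 N * pd 1 (m-1+N) q) = 0 := by
    rw [hq 1 (m-1+N) (by omega)]; ring
  have h1 := Finset.sum_range_succ'
    (fun k => C (k : K) * C (fc m k) * (t 0 k * pd 1 (m-1+k) q)) N
  have h2 := Finset.sum_range_succ
    (fun k => C (k : K) * C (fc m k) * (t 0 k * pd 1 (m-1+k) q)) N
  beta_reduce at h1 h2
  rw [hG0, add_zero] at h1
  rw [hGN, add_zero] at h2
  have e3 : (∑ j ∈ range N, C ((j:K)+1) * C (fc m (j+1)) * (t 0 (j+1) * pd 1 (m-1+(j+1)) q))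
      = ∑ j ∈ range N, C (((j+1:ℕ)) : K) * C (fc m (j+1)) * (t 0 (j+1) * pd 1 (m-1+(j+1)) q) := by
    refine Finset.sum_congr rfl fun j _ => ?_
    push_cast
    ring
  rw [e3]
  linear_combination h2 - h1

lemma pair_b2 (hq : ∀ a p, N ≤ p → pd a p q = 0) :
    S0b N (S2op m N q) - S2op m N (S0b N q)
      = - ∑ k ∈ range N, C (((m-1+k:ℕ):K)+1) * C (fc m k) * (t 0 k * pd 1 (m-1+k) q) := by
  have h := gen N (fun j => (j:K)+1) (fc m) 1 1 0 1 (fun j => j) (fun j => j)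
      (fun k => k) (fun k => m-1+k) q
  beta_reduce at h
  simp only [S0b, S2op]
  rw [h, sum_false (cond := fun k j => ((0:Fin 2), k) = ((1:Fin 2), j))
      _ (fun k j => by simp [Prod.ext_iff]), zero_sub]
  have e2 : (∑ k ∈ range N, ∑ j ∈ range N,
      if ((1:Fin 2), j) = ((1:Fin 2), m-1+k) then
        C ((j:K)+1) * C (fc m k) * (t 0 k * pd 1 j q) else 0)
      = ∑ k ∈ range N, C (((m-1+k:ℕ):K)+1) * C (fc m k) * (t 0 k * pd 1 (m-1+k) q) := by
    refine Finset.sum_congr rfl fun k hk => ?_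
    exact sum_delta (n := m-1+k) _ (fun j => by simp [Prod.ext_iff]; try omega)
      (fun h' => by rw [hq 1 (m-1+k) (by omega)]; ring)
  rw [e2]

lemma pair_c2 :
    S0c N (S2op m N q) - S2op m N (S0c N q) = 0 := by
  have h := gen N (fun _ => (2:K)) (fc m) 0 1 0 1 (fun j => j+1) (fun j => j)
      (fun k => k) (fun k => m-1+k) q
  beta_reduce at h
  simp only [S0c, S2op]
  rw [h, sum_false _ (fun k j => by simp [Prod.ext_iff]),
    sum_false _ (fun k j => by simp [Prod.ext_iff])]
  simp

lemma PS2sum (hm : 1 ≤ m) :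
    (∑ k ∈ range N, C (k : K) * C (fc m k) * (t 0 k * pd 1 (m-1+k) q))
    - (∑ k ∈ range N, C (((m-1+k:ℕ):K)+1) * C (fc m k) * (t 0 k * pd 1 (m-1+k) q))
      = C (-(m:K)) * S2op m N q := by
  rw [← Finset.sum_sub_distrib]
  simp only [S2op, Finset.mul_sum]
  refine Finset.sum_congr rfl fun k _ => ?_
  have hx : ((m - 1 + k : ℕ) : K) = (m:K) - 1 + (k:K) := by
    rw [Nat.cast_add, Nat.cast_sub hm, Nat.cast_one]
  have hC : C (k : K) - C (((m-1+k:ℕ):K)+1) = (C (-(m:K)) : P) := by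
    rw [← map_sub]; congr 1; rw [hx]; ring
  linear_combination (C (fc m k) * (t 0 k * pd 1 (m-1+k) q)) * hC

lemma pair_aD :
    S0a N (Dop m q) - Dop m (S0a N q) = 0 := by
  have h := genD N (m-1) (fun j => (j:K)+1) (dc m) (eps^2) 0 0 1 1
      (fun j => j+1) (fun j => j+1) (fun k => k) (fun k => m-k-2) q
  beta_reduce at h
  simp only [S0a, Dop]
  rw [h, sum_false _ (fun k j => by simp [Prod.ext_iff]),
    sum_false _ (fun k j => by simp [Prod.ext_iff])]
  simp

lemma pair_cD :
    S0c N (Dop m q) - Dop m (S0c N q) = 0 := by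
  have h := genD N (m-1) (fun _ => (2:K)) (dc m) (eps^2) 0 1 1 1
      (fun j => j+1) (fun j => j) (fun k => k) (fun k => m-k-2) q
  beta_reduce at h
  simp only [S0c, Dop]
  rw [h, sum_false _ (fun k j => by simp [Prod.ext_iff]),
    sum_false _ (fun k j => by simp [Prod.ext_iff])]
  simp

lemma pair_bD (hm : 1 ≤ m) (hN : m + 1 ≤ N) :
    S0b N (Dop m q) - Dop m (S0b N q) = C (-(m:K)) * Dop m q := by
  have h := genD N (m-1) (fun j => (j:K)+1) (dc m) (eps^2) 1 1 1 1
      (fun j => j) (fun j => j) (fun k => k) (fun k => m-k-2) q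
  beta_reduce at h
  simp only [S0b, Dop]
  rw [h]
  have e1 : (∑ k ∈ range (m-1), ∑ j ∈ range N,
      if ((1:Fin 2), j) = ((1:Fin 2), k) then
        C (eps^2) * (C ((j:K)+1) * C (dc m k) * pd 1 (m-k-2) (pd 1 j q)) else 0)
      = ∑ k ∈ range (m-1),
          C (eps^2) * (C ((k:K)+1) * C (dc m k) * pd 1 (m-k-2) (pd 1 k q)) := by
    refine Finset.sum_congr rfl fun k hk => ?_
    have hk' := mem_range.mp hk
    exact sum_delta (n := k) _ (fun j => by simp [Prod.ext_iff]; try omega)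
      (fun h' => absurd h' (by omega))
  have e2 : (∑ k ∈ range (m-1), ∑ j ∈ range N,
      if ((1:Fin 2), j) = ((1:Fin 2), m-k-2) then
        C (eps^2) * (C ((j:K)+1) * C (dc m k) * pd 1 k (pd 1 j q)) else 0)
      = ∑ k ∈ range (m-1),
          C (eps^2) * (C (((m-k-2:ℕ):K)+1) * C (dc m k) * pd 1 k (pd 1 (m-k-2) q)) := by
    refine Finset.sum_congr rfl fun k hk => ?_
    have hk' := mem_range.mp hk
    exact sum_delta (n := m-k-2) _ (fun j => by simp [Prod.ext_iff]; try omega)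
      (fun h' => absurd h' (by omega))
  rw [e1, e2]
  simp only [Finset.mul_sum]
  rw [← Finset.sum_neg_distrib, ← Finset.sum_sub_distrib]
  refine Finset.sum_congr rfl fun k hk => ?_
  have hk' := mem_range.mp hk
  have hx : ((m - k - 2 : ℕ) : K) = (m:K) - (k:K) - 2 := by
    rw [show m - k - 2 = m - (k+2) by omega, Nat.cast_sub (by omega : k+2 ≤ m)]
    push_cast; ring
  have hC : C ((k:K)+1) + C (((m-k-2:ℕ):K)+1) + C (-(m:K)) = (0 : P) := by
    rw [← map_add, ← map_add, hx, show ((k:K)+1) + (((m:K)-(k:K)-2)+1) + -(m:K) = 0 by ring,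
      map_zero]
  have hcm : pd 1 (m-k-2) (pd 1 k q) = pd 1 k (pd 1 (m-k-2) q) := pd_comm 1 1 (m-k-2) k q
  rw [hcm]
  linear_combination (- (C (eps^2) * C (dc m k) * pd 1 k (pd 1 (m-k-2) q))) * hC

end pairs3
end Virasoro
namespace Virasoro
open Finset

lemma core (m N : ℕ) (q : P) (hm : 1 ≤ m) (hN : m + 1 ≤ N)
    (hq : ∀ a p, N ≤ p → pd a p q = 0) :
    L0f N (Lf m N q) - Lf m N (L0f N q) = C (-(m:K)) * Lf m N q := by
  simp only [L0f, Lf, S0a_add, S0b_add, S0c_add, Cop_add, Dop_add, S1a_add, S1b_add, S2op_add]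
  linear_combination pair_aD m N q + pair_bD m N q hm hN + pair_cD m N q
    + pair_aa m N q hq + pair_ab m N q + pair_ba m N q + pair_bb m N q hq
    + pair_ca m N q hq + pair_cb m N q hq
    + pair_a2 m N q hm hq + pair_b2 m N q hq + pair_c2 m N q + PS2sum m N q hm
    + PCd m q + PC1a m N q + PC1b m N q + PC2 m N q

lemma pd_term_zero (a b b' : Fin 2) (p r r' : ℕ) (c : K) (q : P)
    (h1 : ¬((b, r) = (a, p))) (h2 : pd a p q = 0) :
    pd a p (C c * (t b r * pd b' r' q)) = 0 := by
  rw [pd_C_mul, pd_t_mul, if_neg h1, pd_comm, h2, pd_zero]; ring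

lemma pd_dterm_zero (a : Fin 2) (p k k' : ℕ) (q : P) (h2 : pd a p q = 0) :
    pd a p (pd 1 k (pd 1 k' q)) = 0 := by
  rw [pd_comm3, h2, pd_zero, pd_zero]

lemma pd_Cop_zero (a : Fin 2) (p : ℕ) (q : P) (h1 : ¬(((0:Fin 2), (0:ℕ)) = (a, p)))
    (h2 : pd a p q = 0) : pd a p (Cop q) = 0 := by
  rw [pd_Cop a p q h1, h2]
  simp [Cop]

lemma pd0_L0f (N : ℕ) (q : P) (hq : ∀ a p, N ≤ p → pd a p q = 0) (p : ℕ) (hp : N+1 ≤ p) :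
    pd 0 p (L0f N q) = 0 := by
  have hA : pd 0 p (S0a N q) = 0 := by
    rw [S0a, pd_sum]
    refine Finset.sum_eq_zero fun j hj => ?_
    have hj' := Finset.mem_range.mp hj
    exact pd_term_zero _ _ _ _ _ _ _ _
      (fun hc => by simp [Prod.ext_iff] at hc; omega) (hq 0 p (by omega))
  have hB : pd 0 p (S0b N q) = 0 := by
    rw [S0b, pd_sum]
    refine Finset.sum_eq_zero fun j hj => ?_
    exact pd_term_zero _ _ _ _ _ _ _ _
      (fun hc => by simp [Prod.ext_iff] at hc) (hq 0 p (by omega))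
  have hCc : pd 0 p (S0c N q) = 0 := by
    rw [S0c, pd_sum]
    refine Finset.sum_eq_zero fun j hj => ?_
    have hj' := Finset.mem_range.mp hj
    exact pd_term_zero _ _ _ _ _ _ _ _
      (fun hc => by simp [Prod.ext_iff] at hc; omega) (hq 0 p (by omega))
  have hD : pd 0 p (Cop q) = 0 :=
    pd_Cop_zero _ _ _ (fun hc => by simp [Prod.ext_iff] at hc; omega) (hq 0 p (by omega))
  simp only [L0f, pd_add, hA, hB, hCc, hD, add_zero]

lemma pd1_L0f (N : ℕ) (q : P) (hq : ∀ a p, N ≤ p → pd a p q = 0) (p : ℕ) (hp : N ≤ p) :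
    pd 1 p (L0f N q) = 0 := by
  have hA : pd 1 p (S0a N q) = 0 := by
    rw [S0a, pd_sum]
    refine Finset.sum_eq_zero fun j hj => ?_
    exact pd_term_zero _ _ _ _ _ _ _ _
      (fun hc => by simp [Prod.ext_iff] at hc) (hq 1 p hp)
  have hB : pd 1 p (S0b N q) = 0 := by
    rw [S0b, pd_sum]
    refine Finset.sum_eq_zero fun j hj => ?_
    have hj' := Finset.mem_range.mp hj
    exact pd_term_zero _ _ _ _ _ _ _ _
      (fun hc => by simp [Prod.ext_iff] at hc; omega) (hq 1 p hp)
  have hCc : pd 1 p (S0c N q) = 0 := by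
    rw [S0c, pd_sum]
    refine Finset.sum_eq_zero fun j hj => ?_
    exact pd_term_zero _ _ _ _ _ _ _ _
      (fun hc => by simp [Prod.ext_iff] at hc) (hq 1 p hp)
  have hD : pd 1 p (Cop q) = 0 :=
    pd_Cop_zero _ _ _ (fun hc => by simp [Prod.ext_iff] at hc) (hq 1 p hp)
  simp only [L0f, pd_add, hA, hB, hCc, hD, add_zero]

lemma pd0_Lf (m N : ℕ) (q : P) (hq : ∀ a p, N ≤ p → pd a p q = 0) (p : ℕ) (hp : N+1 ≤ p) :
    pd 0 p (Lf m N q) = 0 := by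
  have hD : pd 0 p (Dop m q) = 0 := by
    rw [Dop, pd_C_mul, pd_sum]
    rw [Finset.sum_eq_zero fun k _ => by
      rw [pd_C_mul, pd_dterm_zero _ _ _ _ _ (hq 0 p (by omega))]; ring]
    ring
  have hA : pd 0 p (S1a m N q) = 0 := by
    rw [S1a, pd_sum]
    refine Finset.sum_eq_zero fun k hk => ?_
    have hk' := Finset.mem_range.mp hk
    exact pd_term_zero _ _ _ _ _ _ _ _
      (fun hc => by simp [Prod.ext_iff] at hc; omega) (hq 0 p (by omega))
  have hB : pd 0 p (S1b m N q) = 0 := by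
    rw [S1b, pd_sum]
    refine Finset.sum_eq_zero fun k hk => ?_
    exact pd_term_zero _ _ _ _ _ _ _ _
      (fun hc => by simp [Prod.ext_iff] at hc) (hq 0 p (by omega))
  have hS2 : pd 0 p (S2op m N q) = 0 := by
    rw [S2op, pd_sum]
    refine Finset.sum_eq_zero fun k hk => ?_
    have hk' := Finset.mem_range.mp hk
    exact pd_term_zero _ _ _ _ _ _ _ _
      (fun hc => by simp [Prod.ext_iff] at hc; omega) (hq 0 p (by omega))
  simp only [Lf, pd_add, hD, hA, hB, hS2, add_zero]

lemma pd1_Lf (m N : ℕ) (q : P) (hm : 1 ≤ m) (hq : ∀ a p, N ≤ p → pd a p q = 0)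
    (p : ℕ) (hp : N ≤ p) :
    pd 1 p (Lf m N q) = 0 := by
  have hD : pd 1 p (Dop m q) = 0 := by
    rw [Dop, pd_C_mul, pd_sum]
    rw [Finset.sum_eq_zero fun k _ => by
      rw [pd_C_mul, pd_dterm_zero _ _ _ _ _ (hq 1 p hp)]; ring]
    ring
  have hA : pd 1 p (S1a m N q) = 0 := by
    rw [S1a, pd_sum]
    refine Finset.sum_eq_zero fun k hk => ?_
    exact pd_term_zero _ _ _ _ _ _ _ _
      (fun hc => by simp [Prod.ext_iff] at hc) (hq 1 p hp)
  have hB : pd 1 p (S1b m N q) = 0 := by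
    rw [S1b, pd_sum]
    refine Finset.sum_eq_zero fun k hk => ?_
    have hk' := Finset.mem_range.mp hk
    exact pd_term_zero _ _ _ _ _ _ _ _
      (fun hc => by simp [Prod.ext_iff] at hc; omega) (hq 1 p hp)
  have hS2 : pd 1 p (S2op m N q) = 0 := by
    rw [S2op, pd_sum]
    refine Finset.sum_eq_zero fun k hk => ?_
    exact pd_term_zero _ _ _ _ _ _ _ _
      (fun hc => by simp [Prod.ext_iff] at hc) (hq 1 p hp)
  simp only [Lf, pd_add, hD, hA, hB, hS2, add_zero]

end Virasoro
namespace Virasoro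
open Finset

lemma L0_trunc (N : ℕ) (q : P) (h0 : ∀ p, N+1 ≤ p → pd 0 p q = 0)
    (h1 : ∀ p, N ≤ p → pd 1 p q = 0) :
    L0 q = L0f N q := by
  unfold L0 L0f S0a S0b S0c Cop
  have hsupp : (Function.support fun k : ℕ =>
      ((k : K) + 1) • (t 0 (k + 1) * pd 0 (k + 1) q + t 1 k * pd 1 k q)
        + (2 : K) • (t 0 (k + 1) * pd 1 k q)) ⊆ ↑(range N) := by
    intro k hk
    simp only [Function.mem_support] at hk
    by_contra hmem
    have hkN : N ≤ k := by simpa using hmem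
    apply hk
    rw [h0 (k+1) (by omega), h1 k (by omega)]
    simp
  rw [finsum_eq_sum_of_support_subset _ hsupp]
  have e : ∀ k ∈ range N,
      ((k : K) + 1) • (t 0 (k + 1) * pd 0 (k + 1) q + t 1 k * pd 1 k q)
        + (2 : K) • (t 0 (k + 1) * pd 1 k q)
      = C ((k:K)+1) * (t 0 (k+1) * pd 0 (k+1) q) + C ((k:K)+1) * (t 1 k * pd 1 k q)
        + C (2:K) * (t 0 (k+1) * pd 1 k q) := by
    intro k _
    rw [smul_eq_C_mul, smul_eq_C_mul]
    ring
  rw [Finset.sum_congr rfl e, Finset.sum_add_distrib, Finset.sum_add_distrib,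
    smul_eq_C_mul, mul_assoc]

lemma Lpos_trunc (m N : ℕ) (q : P) (h0 : ∀ p, N+1 ≤ p → pd 0 p q = 0)
    (h1 : ∀ p, N ≤ p → pd 1 p q = 0) :
    Lpos m q = Lf m N q := by
  unfold Lpos Lf Dop S1a S1b S2op ec fc dc
  have hs1 : (Function.support fun k : ℕ =>
      (((Nat.factorial (m + k + 1) : ℚ) / (Nat.factorial k : ℚ) : ℚ) : K) •
        (t 0 (k + 1) * pd 0 (m + k + 1) q + t 1 k * pd 1 (m + k) q)) ⊆ ↑(range N) := by
    intro k hk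
    simp only [Function.mem_support] at hk
    by_contra hmem
    have hkN : N ≤ k := by simpa using hmem
    apply hk
    rw [h0 (m+k+1) (by omega), h1 (m+k) (by omega)]
    simp
  have hs2 : (Function.support fun k : ℕ =>
      ((2 * alphaC m k : ℚ) : K) • (t 0 k * pd 1 (m - 1 + k) q)) ⊆ ↑(range N) := by
    intro k hk
    simp only [Function.mem_support] at hk
    by_contra hmem
    have hkN : N ≤ k := by simpa using hmem
    apply hk
    rw [h1 (m-1+k) (by omega)]
    simp
  rw [finsum_eq_sum_of_support_subset _ hs1, finsum_eq_sum_of_support_subset _ hs2]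
  have e1 : ∀ k ∈ range N,
      (((Nat.factorial (m + k + 1) : ℚ) / (Nat.factorial k : ℚ) : ℚ) : K) •
          (t 0 (k + 1) * pd 0 (m + k + 1) q + t 1 k * pd 1 (m + k) q)
      = C ((((Nat.factorial (m + k + 1) : ℚ) / (Nat.factorial k : ℚ) : ℚ) : K)) *
          (t 0 (k+1) * pd 0 (m+k+1) q)
        + C ((((Nat.factorial (m + k + 1) : ℚ) / (Nat.factorial k : ℚ) : ℚ) : K)) *
          (t 1 k * pd 1 (m+k) q) := by
    intro k _
    rw [smul_eq_C_mul]
    ring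
  have e2 : ∀ k ∈ range N,
      ((2 * alphaC m k : ℚ) : K) • (t 0 k * pd 1 (m - 1 + k) q)
      = C (((2 * alphaC m k : ℚ) : K)) * (t 0 k * pd 1 (m-1+k) q) := by
    intro k _
    rw [smul_eq_C_mul]
  have e3 : ∀ k ∈ range (m-1),
      ((Nat.factorial (k + 1) * Nat.factorial (m - k - 1) : ℕ) : K) • pd 1 k (pd 1 (m - k - 2) q)
      = C (((Nat.factorial (k + 1) * Nat.factorial (m - k - 1) : ℕ) : K)) *
          pd 1 k (pd 1 (m - k - 2) q) := by
    intro k _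
    rw [smul_eq_C_mul]
  rw [Finset.sum_congr rfl e1, Finset.sum_congr rfl e2, Finset.sum_congr rfl e3,
    Finset.sum_add_distrib, smul_eq_C_mul]
  ring

end Virasoro
namespace Virasoro

lemma exists_bound (q : P) : ∃ n, ∀ (a : Fin 2) (p : ℕ), n ≤ p → pd a p q = 0 :=
  ⟨(q.vars.sup Prod.snd) + 1, fun a p hp =>
    pderiv_eq_zero_of_notMem_vars fun hmem => by
      have h := Finset.le_sup (f := Prod.snd) hmem
      simp only at h
      omega⟩

end Virasoro

/-- The Virasoro commutation relation `[L_0, L_m] = −m L_m` for every `m ≥ 1`,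
as operators on `P`. -/
theorem virasoro_comm_zero_m (m : ℕ) (hm : 1 ≤ m) (q : P) :
    L0 (Lpos m q) - Lpos m (L0 q) = (-(m : K)) • Lpos m q := by
  classical
  open Virasoro in
  (obtain ⟨n, hn⟩ := exists_bound q;
   have hq : ∀ (a : Fin 2) (p : ℕ), n + m + 1 ≤ p → pd a p q = 0 :=
     fun a p hp => hn a p (by omega);
   have h0q : ∀ p, (n + m + 1) + 1 ≤ p → pd 0 p q = 0 := fun p hp => hq 0 p (by omega);
   have h1q : ∀ p, n + m + 1 ≤ p → pd 1 p q = 0 := fun p hp => hq 1 p hp;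
   rw [Lpos_trunc m (n+m+1) q h0q h1q, L0_trunc (n+m+1) q h0q h1q,
     L0_trunc (n+m+1) (Lf m (n+m+1) q) (fun p hp => pd0_Lf m (n+m+1) q hq p hp)
       (fun p hp => pd1_Lf m (n+m+1) q hm hq p hp),
     Lpos_trunc m (n+m+1) (L0f (n+m+1) q) (fun p hp => pd0_L0f (n+m+1) q hq p hp)
       (fun p hp => pd1_L0f (n+m+1) q hq p hp),
     core m (n+m+1) q hm (by omega) hq, MvPolynomial.smul_eq_C_mul])

end ExtendedToda
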